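/- Let {α_j} be positive reals with α_j ≤ c_1 for all j, set s_{-1} = 0 and s_n = Σ_{j=0}^n 1/α_j. For real p, q ≥ 0 with max{p,q} < 1, there is a constant C_0 depending only on c_1, p, q such that Σ_{j=0}^n (1/α_j) (s_n - s_{j-1})^{-p} s_j^{-q} ≤ C_0 s_n^{1-p-q} for all n ≥ 0. -/

import Mathlib

/-- Key calculus inequality: for `0 < r ≤ 1`, `0 ≤ a ≤ b`, `0 < b`,
`(b - a) * b^(r-1) ≤ (b^r - a^r)/r`. -/
lemma aux_rpow_step {r a b : ℝ} (hr0 : 0 < r) (hr1 : r ≤ 1) (ha : 0 ≤ a)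
    (hab : a ≤ b) (hb : 0 < b) :
    (b - a) * b ^ (r - 1) ≤ (b ^ r - a ^ r) / r := by
  have hx0 : (0:ℝ) ≤ a / b := div_nonneg ha hb.le
  have key : (a / b) ^ r ≤ 1 + r * (a / b - 1) := by
    have := rpow_one_add_le_one_add_mul_self (s := a / b - 1) (by linarith) hr0.le hr1
    simpa using this
  have hBr : (0:ℝ) ≤ b ^ r := Real.rpow_nonneg hb.le r
  have har : a ^ r = (a / b) ^ r * b ^ r := by
    rw [← Real.mul_rpow hx0 hb.le, div_mul_cancel₀ _ hb.ne']
  have hbr1 : b ^ (r - 1) = b ^ r / b := Real.rpow_sub_one hb.ne' r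
  rw [le_div_iff₀ hr0, hbr1, har]
  have h1 : 1 - (a / b) ^ r ≥ r * (1 - a / b) := by linarith
  have h2 : (b - a) * (b ^ r / b) * r = (r * (1 - a / b)) * b ^ r := by
    field_simp
  rw [h2]
  nlinarith [mul_le_mul_of_nonneg_right h1 hBr]

theorem stmt_5 (c1 p q : ℝ) (hc1 : 0 < c1) (hp : 0 ≤ p) (hq : 0 ≤ q)
    (hpq : max p q < 1) :
    ∃ C0 : ℝ, 0 < C0 ∧ ∀ (α : ℕ → ℝ), (∀ j, 0 < α j) → (∀ j, α j ≤ c1) →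
      ∀ n : ℕ,
        ∑ j ∈ Finset.range (n + 1),
            (1 / α j) *
              ((∑ i ∈ Finset.range (n + 1), 1 / α i) -
                  ∑ i ∈ Finset.range j, 1 / α i) ^ (-p) *
              (∑ i ∈ Finset.range (j + 1), 1 / α i) ^ (-q) ≤
          C0 * (∑ i ∈ Finset.range (n + 1), 1 / α i) ^ (1 - p - q) := by
  have hp1 : p < 1 := lt_of_le_of_lt (le_max_left p q) hpq
  have hq1 : q < 1 := lt_of_le_of_lt (le_max_right p q) hpq
  have h1p : 0 < 1 - p := by linarith
  have h1q : 0 < 1 - q := by linarith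
  have h2p : (0:ℝ) < 2 ^ p := Real.rpow_pos_of_pos two_pos p
  have h2q : (0:ℝ) < 2 ^ q := Real.rpow_pos_of_pos two_pos q
  refine ⟨2 ^ p / (1 - q) + 2 ^ q / (1 - p), by positivity, fun α hα hαc n => ?_⟩
  set s : ℕ → ℝ := fun j => ∑ i ∈ Finset.range j, 1 / α i with hs
  have hsmono : Monotone s := by
    apply monotone_nat_of_le_succ
    intro k
    simp only [hs, Finset.sum_range_succ]
    have h2 : 0 < 1 / α k := one_div_pos.mpr (hα k)
    linarith
  have hstep : ∀ j, s (j + 1) - s j = 1 / α j := by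
    intro j; simp [hs, Finset.sum_range_succ]
  have hs0 : s 0 = 0 := by simp [hs]
  have hsnn : ∀ j, 0 ≤ s j := fun j => hs0 ▸ hsmono (Nat.zero_le j)
  set S := s (n + 1) with hS
  have hSpos : 0 < S := by
    have : s 0 < s 1 := by
      have := hα 0
      simp only [hs, Finset.sum_range_succ, Finset.sum_range_zero]
      positivity
    calc (0:ℝ) = s 0 := hs0.symm
    _ < s 1 := this
    _ ≤ S := hsmono (by omega)
  -- the two telescoping summands
  set F : ℕ → ℝ := fun j => 2 ^ p / (1 - q) * S ^ (-p) * ((s (j+1)) ^ (1-q) - (s j) ^ (1-q))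
  set G : ℕ → ℝ := fun j => 2 ^ q / (1 - p) * S ^ (-q) * ((S - s j) ^ (1-p) - (S - s (j+1)) ^ (1-p))
  have hSp : (0:ℝ) < S ^ (-p) := Real.rpow_pos_of_pos hSpos _
  have hSq : (0:ℝ) < S ^ (-q) := Real.rpow_pos_of_pos hSpos _
  have hFnn : ∀ j, 0 ≤ F j := by
    intro j
    have : (s j) ^ (1-q) ≤ (s (j+1)) ^ (1-q) :=
      Real.rpow_le_rpow (hsnn j) (hsmono (Nat.le_succ j)) h1q.le
    have h := sub_nonneg.mpr this
    positivity
  have hGnn : ∀ j, j ∈ Finset.range (n+1) → 0 ≤ G j := by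
    intro j hj
    rw [Finset.mem_range] at hj
    have hj1 : s (j + 1) ≤ S := hsmono (by omega)
    have : (S - s (j+1)) ^ (1-p) ≤ (S - s j) ^ (1-p) :=
      Real.rpow_le_rpow (by linarith) (by have h := hstep j; have h2 : 0 < 1 / α j := one_div_pos.mpr (hα j); linarith) h1p.le
    have h := sub_nonneg.mpr this
    positivity
  -- pointwise bound
  have hpoint : ∀ j ∈ Finset.range (n+1),
      (1 / α j) * (S - s j) ^ (-p) * (s (j+1)) ^ (-q) ≤ F j + G j := by
    intro j hj
    rw [Finset.mem_range] at hj
    have hαj := hα j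
    have hd : 0 < 1 / α j := by positivity
    have hsj1 : s (j+1) ≤ S := hsmono (by omega)
    have hsj1pos : 0 < s (j+1) := by have := hstep j; nlinarith [hsnn j]
    have hb : 0 < S - s j := by have := hstep j; nlinarith
    rcases le_total (s j) (S / 2) with hcase | hcase
    · -- case A : use telescoping in q, bound the p factor
      have hxp : (S - s j) ^ (-p) ≤ 2 ^ p * S ^ (-p) := by
        have h1 : (S / 2) ^ (-p) = 2 ^ p * S ^ (-p) := by
          rw [Real.div_rpow hSpos.le two_pos.le, Real.rpow_neg two_pos.le,
            div_eq_mul_inv, inv_inv, mul_comm]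
        calc (S - s j) ^ (-p) ≤ (S / 2) ^ (-p) :=
              Real.rpow_le_rpow_of_nonpos (by linarith) (by linarith) (by linarith)
        _ ≤ 2 ^ p * S ^ (-p) := h1.le
      have htel : (1 / α j) * (s (j+1)) ^ (-q) ≤
          ((s (j+1)) ^ (1-q) - (s j) ^ (1-q)) / (1 - q) := by
        have := aux_rpow_step (r := 1 - q) (a := s j) (b := s (j+1)) h1q (by linarith)
          (hsnn j) (hsmono (Nat.le_succ j)) hsj1pos
        have he : (1 - q) - 1 = -q := by ring
        rw [he, hstep j] at this
        linarith [this]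
      have hnn1 : 0 ≤ (1 / α j) * (s (j+1)) ^ (-q) := by positivity
      have hnn2 : (0:ℝ) ≤ (S - s j) ^ (-p) := Real.rpow_nonneg hb.le _
      calc (1 / α j) * (S - s j) ^ (-p) * (s (j+1)) ^ (-q)
          = (S - s j) ^ (-p) * ((1 / α j) * (s (j+1)) ^ (-q)) := by ring
        _ ≤ (2 ^ p * S ^ (-p)) * (((s (j+1)) ^ (1-q) - (s j) ^ (1-q)) / (1 - q)) :=
            mul_le_mul hxp htel hnn1 (by positivity)
        _ = F j := by simp only [F]; ring
        _ ≤ F j + G j := le_add_of_nonneg_right (hGnn j (Finset.mem_range.mpr hj))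
    · -- case B : use telescoping in p, bound the q factor
      have hxq : (s (j+1)) ^ (-q) ≤ 2 ^ q * S ^ (-q) := by
        have h1 : (S / 2) ^ (-q) = 2 ^ q * S ^ (-q) := by
          rw [Real.div_rpow hSpos.le two_pos.le, Real.rpow_neg two_pos.le,
            div_eq_mul_inv, inv_inv, mul_comm]
        have hhalf : S / 2 ≤ s (j+1) := le_trans hcase (hsmono (Nat.le_succ j))
        calc (s (j+1)) ^ (-q) ≤ (S / 2) ^ (-q) :=
              Real.rpow_le_rpow_of_nonpos (by linarith) hhalf (by linarith)
        _ ≤ 2 ^ q * S ^ (-q) := h1.le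
      have htel : (1 / α j) * (S - s j) ^ (-p) ≤
          ((S - s j) ^ (1-p) - (S - s (j+1)) ^ (1-p)) / (1 - p) := by
        have := aux_rpow_step (r := 1 - p) (a := S - s (j+1)) (b := S - s j) h1p
          (by linarith) (by linarith) (by have := hstep j; nlinarith) hb
        have he : (1 - p) - 1 = -p := by ring
        have hd' : S - s j - (S - s (j+1)) = 1 / α j := by
          have := hstep j; linarith
        rw [he, hd'] at this
        linarith [this]
      have hnn1 : 0 ≤ (1 / α j) * (S - s j) ^ (-p) :=
        mul_nonneg hd.le (Real.rpow_nonneg hb.le _)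
      have hnn2 : (0:ℝ) ≤ (s (j+1)) ^ (-q) := Real.rpow_nonneg hsj1pos.le _
      calc (1 / α j) * (S - s j) ^ (-p) * (s (j+1)) ^ (-q)
          = ((1 / α j) * (S - s j) ^ (-p)) * (s (j+1)) ^ (-q) := by ring
        _ ≤ (((S - s j) ^ (1-p) - (S - s (j+1)) ^ (1-p)) / (1 - p)) * (2 ^ q * S ^ (-q)) :=
            mul_le_mul htel hxq hnn2 (div_nonneg (sub_nonneg.mpr
              (Real.rpow_le_rpow (by linarith)
                (by have h := hstep j
                    have h2 : 0 < 1 / α j := one_div_pos.mpr (hα j)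
                    linarith) h1p.le)) h1p.le)
        _ = G j := by simp only [G]; ring
        _ ≤ F j + G j := le_add_of_nonneg_left (hFnn j)
  -- sum up
  have hsum : ∑ j ∈ Finset.range (n+1),
      (1 / α j) * (S - s j) ^ (-p) * (s (j+1)) ^ (-q) ≤
      ∑ j ∈ Finset.range (n+1), (F j + G j) := Finset.sum_le_sum hpoint
  have hF : ∑ j ∈ Finset.range (n+1), F j =
      2 ^ p / (1 - q) * S ^ (-p) * S ^ (1-q) := by
    simp only [F]
    rw [← Finset.mul_sum, Finset.sum_range_sub (fun j => (s j) ^ (1-q))]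
    rw [hs0, Real.zero_rpow (by linarith), sub_zero]
  have hG : ∑ j ∈ Finset.range (n+1), G j =
      2 ^ q / (1 - p) * S ^ (-q) * S ^ (1-p) := by
    simp only [G]
    rw [← Finset.mul_sum, Finset.sum_range_sub' (fun j => (S - s j) ^ (1-p))]
    rw [hs0, sub_zero, show S - s (n+1) = 0 from sub_eq_zero.mpr hS,
      Real.zero_rpow (by linarith), sub_zero]
  have hexp1 : S ^ (-p) * S ^ (1-q) = S ^ (1-p-q) := by
    rw [← Real.rpow_add hSpos]; ring_nf
  have hexp2 : S ^ (-q) * S ^ (1-p) = S ^ (1-p-q) := by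
    rw [← Real.rpow_add hSpos]; ring_nf
  calc ∑ j ∈ Finset.range (n + 1),
        (1 / α j) * (S - s j) ^ (-p) * (s (j+1)) ^ (-q)
      ≤ ∑ j ∈ Finset.range (n+1), (F j + G j) := hsum
    _ = 2 ^ p / (1 - q) * S ^ (-p) * S ^ (1-q) +
        2 ^ q / (1 - p) * S ^ (-q) * S ^ (1-p) := by
        rw [Finset.sum_add_distrib, hF, hG]
    _ = (2 ^ p / (1 - q) + 2 ^ q / (1 - p)) * S ^ (1-p-q) := by
        rw [mul_assoc, mul_assoc, hexp1, hexp2]; ring
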